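/- Let π be a holomorphic toric Poisson structure on X = ℂPⁿ and d_π = [π,·]. Then d_π(V_I^k) ⊆ V_I^{k+1} for all I ∈ S_k (0 ≤ k ≤ n), where V_I^k = ℂ(χ^I·𝒱_I)∧W^{k−|I|} is viewed as a subspace of H^0(X, ∧^k T_X) and V_I^{k+1} as a subspace of H^0(X, ∧^{k+1} T_X). -/

import Mathlib

/-!
Formalization of statements from "Poisson Cohomology of holomorphic toric Poisson
manifolds. I." (W. Hong).

Modeling conventions.  Mathlib has no holomorphic geometry of ℂPⁿ, so we use the
standard faithful algebraic model: a holomorphic multivector field on a toric variety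
is determined by its restriction to the dense open torus, where (in the invariant
frame and with Laurent-monomial coefficients) multivector fields form the algebra
`MV n = AddMonoidAlgebra (ExteriorAlgebra ℂ ℂⁿ) ℤⁿ`: the element `single I ω`
represents `χ^I ⊗ ω` (`χ^I` the Laurent monomial of weight `I`, `ω` a constant
multivector in the frame `v_1, …, v_n`, `v_i = ρ(e_i)`).  Multiplication is the
wedge product.  Similarly `AMV n` models multivector fields on ℂ^{n+1}∖{0} in the
frame `u_i = z_i ∂/∂z_i`.  Holomorphic multivector fields on ℂPⁿ are defined as the
image under `p_*` of the k-vector fields on ℂ^{n+1} with homogeneous polynomial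
coefficients of degree k (this is exactly the classical description of
`H⁰(ℂPⁿ, ∧ᵏ𝒯)`, due to Bondal).  The Schouten differential `d_π = [π,·]` of a
torus-invariant bivector `π = ρ(Π)` acts weightwise by
`[π, χ^I ⊗ ω] = χ^I ⊗ (ι(ι_I Π) ∧ ω)`.
-/

noncomputable section
open Finset

namespace CPn

variable (n : ℕ)

/-- Laurent multivector fields on the open torus (ℂ*)ⁿ ⊆ ℂPⁿ, in the invariant frame. -/
abbrev MV := AddMonoidAlgebra (ExteriorAlgebra ℂ (Fin n → ℂ)) (Fin n → ℤ)

/-- Ambient model: multivector fields on ℂ^{n+1}∖{0} with Laurent-monomial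
coefficients, in the frame u_i = z_i ∂/∂z_i. -/
abbrev AMV := AddMonoidAlgebra (ExteriorAlgebra ℂ (Fin (n+1) → ℂ)) (Fin (n+1) → ℤ)

/-- The Laurent monomial χ^I as a multivector field (of degree 0). -/
def χ (I : Fin n → ℤ) : MV n := AddMonoidAlgebra.single I 1

/-- The vectors e_0 = −(e_1+⋯+e_n), e_1, …, e_n in N_ℂ = ℂⁿ. -/
def EE : Fin (n+1) → (Fin n → ℂ) :=
  Fin.cases (fun _ => -1) (fun j => Pi.single j 1)

/-- The holomorphic vector fields v_i = ρ(e_i) = p_*(z_i ∂/∂z_i), 0 ≤ i ≤ n. -/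
def v (i : Fin (n+1)) : MV n :=
  AddMonoidAlgebra.single 0 (ExteriorAlgebra.ι ℂ (EE n i))

/-- W = span_ℂ{v_1,…,v_n} = ρ(N_ℂ). -/
def W : Submodule ℂ (MV n) :=
  Submodule.span ℂ {x | ∃ i : Fin (n+1), i ≠ 0 ∧ x = v n i}

/-- Extension of a weight I ∈ M ≅ ℤⁿ to (m_0, m_1, …, m_n), m_0 = −Σᵢ m_i, m_i = ⟨I,e_i⟩. -/
def mext (I : Fin n → ℤ) : Fin (n+1) → ℤ :=
  Fin.cases (-(∑ j, I j)) I

/-- The set of indices 0 ≤ i ≤ n with m_i = −1. -/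
def deg1Set (I : Fin n → ℤ) : Finset (Fin (n+1)) :=
  univ.filter fun i => mext n I i = -1

/-- |I| = number of entries of (m_0,…,m_n) equal to −1. -/
def wt (I : Fin n → ℤ) : ℕ := (deg1Set n I).card

/-- 𝒱_I = v_{i_1} ∧ ⋯ ∧ v_{i_l}, where m_{i_1},…,m_{i_l} are the entries equal to −1. -/
def VI (I : Fin n → ℤ) : MV n :=
  (((deg1Set n I).sort (· ≤ ·)).map (v n)).prod

/-- χ^I · 𝒱_I. -/
def chiVI (I : Fin n → ℤ) : MV n := χ n I * VI n I

/-- ℰ_I = e_{i_1} ∧ ⋯ ∧ e_{i_l} ∈ ∧^l N_ℂ (inside the exterior algebra of N_ℂ). -/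
def EI (I : Fin n → ℤ) : ExteriorAlgebra ℂ (Fin n → ℂ) :=
  (((deg1Set n I).sort (· ≤ ·)).map fun i => ExteriorAlgebra.ι ℂ (EE n i)).prod

/-- V_I^k = ℂ(χ^I·𝒱_I) ∧ W^{k−|I|}. -/
def VIk (I : Fin n → ℤ) (k : ℕ) : Submodule ℂ (MV n) :=
  Submodule.span ℂ {chiVI n I} * (W n) ^ (k - wt n I)

/-- u_i = z_i ∂/∂z_i on ℂ^{n+1}. -/
def uu (i : Fin (n+1)) : AMV n :=
  AddMonoidAlgebra.single 0 (ExteriorAlgebra.ι ℂ (Pi.single i 1))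

/-- The Euler vector field e⃗ = Σ_i z_i ∂/∂z_i. -/
def eulerA : AMV n := ∑ i, uu n i

/-- The derivative of p : ℂ^{n+1}∖{0} → ℂPⁿ on the invariant frame:
the frame vector of u_i is sent to e_i (so e_0 = −Σ e_j); in coordinates
w ↦ (w_j − w_0)_{1≤j≤n}. -/
def q : (Fin (n+1) → ℂ) →ₗ[ℂ] (Fin n → ℂ) :=
  LinearMap.pi fun j =>
    (LinearMap.proj j.succ : (Fin (n+1) → ℂ) →ₗ[ℂ] ℂ) -
      (LinearMap.proj (0 : Fin (n+1)) : (Fin (n+1) → ℂ) →ₗ[ℂ] ℂ)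

/-- Pushforward p_* along p : ℂ^{n+1}∖{0} → ℂPⁿ (on torus-invariant fields, i.e.
those of weight a with Σ a = 0, this is the honest pushforward; the weight a
corresponds to the monomial of weight (a_1,…,a_n) in the coordinates t_j = z_j/z_0). -/
def pstar : AMV n →ₗ[ℂ] MV n :=
  (Finsupp.lsum ℂ fun (a : Fin (n+1) → ℤ) =>
    (AddMonoidAlgebra.lsingle (fun j : Fin n => a j.succ) :
        ExteriorAlgebra ℂ (Fin n → ℂ) →ₗ[ℂ] MV n) ∘ₗ
      (ExteriorAlgebra.map (q n)).toLinearMap) ∘ₗ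
    (AddMonoidAlgebra.coeffLinearEquiv ℂ).toLinearMap

/-- u_{i_1} ∧ ⋯ ∧ u_{i_k} for T = {i_1 < ⋯ < i_k} (constant-coefficient part). -/
def wedgeT (T : Finset (Fin (n+1))) : ExteriorAlgebra ℂ (Fin (n+1) → ℂ) :=
  ((T.sort (· ≤ ·)).map fun i => ExteriorAlgebra.ι ℂ (Pi.single i 1)).prod

/-- F̃_k: the k-vector fields on ℂ^{n+1} whose coefficients in the frame
∂_{i_1}∧⋯∧∂_{i_k} are homogeneous polynomials of degree k, restricted to the torus
(z^b ∂_T = z^{b−ε_T} u_T). -/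
def Ftilde (k : ℕ) : Submodule ℂ (AMV n) :=
  Submodule.span ℂ
    { x | ∃ (b : Fin (n+1) → ℕ) (T : Finset (Fin (n+1))), T.card = k ∧ (∑ i, b i) = k ∧
        x = AddMonoidAlgebra.single (fun i => (b i : ℤ) - (if i ∈ T then 1 else 0)) (wedgeT n T) }

/-- H⁰(ℂPⁿ, ∧ᵏ𝒯) = p_*(F̃_k): holomorphic k-vector fields on ℂPⁿ. -/
def H0 (k : ℕ) : Submodule ℂ (MV n) := Submodule.map (pstar n) (Ftilde n k)

/-- ι_I Π ∈ N_ℂ for Π = Σ_{i<j} a i j · e_i∧e_j, where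
ι_I (e_i∧e_j) = ⟨I,e_i⟩e_j − ⟨I,e_j⟩e_i. -/
def contr (a : Fin n → Fin n → ℂ) (I : Fin n → ℤ) : Fin n → ℂ := fun j =>
  ∑ p ∈ univ.filter (fun p : Fin n × Fin n => p.1 < p.2),
    a p.1 p.2 * ((I p.1 : ℂ) * (if p.2 = j then 1 else 0) -
      (I p.2 : ℂ) * (if p.1 = j then 1 else 0))

/-- The toric bivector field π = Σ_{1≤i<j≤n} a i j · v_i ∧ v_j. -/
def piT (a : Fin n → Fin n → ℂ) : MV n :=
  ∑ p ∈ univ.filter (fun p : Fin n × Fin n => p.1 < p.2),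
    a p.1 p.2 • (v n p.1.succ * v n p.2.succ)

/-- The Poisson differential d_π = [π, ·] (Schouten bracket with π = ρ(Π)):
on the toric frame it is given weightwise by [π, χ^I ⊗ ω] = χ^I ⊗ (ι(ι_I Π) ∧ ω). -/
def dPi (a : Fin n → Fin n → ℂ) : MV n →ₗ[ℂ] MV n :=
  (Finsupp.lsum ℂ fun (I : Fin n → ℤ) =>
    (AddMonoidAlgebra.lsingle I : ExteriorAlgebra ℂ (Fin n → ℂ) →ₗ[ℂ] MV n) ∘ₗ
      LinearMap.mulLeft ℂ (ExteriorAlgebra.ι ℂ (contr n a I))) ∘ₗ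
    (AddMonoidAlgebra.coeffLinearEquiv ℂ).toLinearMap

/-- S_k : weights I with all m_i ≥ −1 (0 ≤ i ≤ n) and |I| ≤ k. -/
def Sk (k : ℕ) : Set (Fin n → ℤ) := {I | (∀ i, -1 ≤ mext n I i) ∧ wt n I ≤ k}

/-- S(k) : weights I with all m_i ≥ −1 (0 ≤ i ≤ n) and |I| = k. -/
def Slevel (k : ℕ) : Set (Fin n → ℤ) := {I | (∀ i, -1 ≤ mext n I i) ∧ wt n I = k}

/-- S_k(π) : I ∈ S_k satisfying (ι_I Π) ∧ ℰ_I = 0. -/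
def SkPi (a : Fin n → Fin n → ℂ) (k : ℕ) : Set (Fin n → ℤ) :=
  {I | I ∈ Sk n k ∧ ExteriorAlgebra.ι ℂ (contr n a I) * EI n I = 0}

/-- S(k,π) : I with |I| = k, all m_i ≥ −1, satisfying (ι_I Π) ∧ ℰ_I = 0. -/
def SlevelPi (a : Fin n → Fin n → ℂ) (k : ℕ) : Set (Fin n → ℤ) :=
  {I | I ∈ Slevel n k ∧ ExteriorAlgebra.ι ℂ (contr n a I) * EI n I = 0}

/-- Poisson cocycles in degree k: holomorphic k-vector fields killed by d_π. -/
def cocycles (a : Fin n → Fin n → ℂ) (k : ℕ) : Submodule ℂ (MV n) :=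
  H0 n k ⊓ LinearMap.ker (dPi n a)

/-- Poisson coboundaries in degree k: d_π of the holomorphic (k−1)-vector fields. -/
def cobound (a : Fin n → Fin n → ℂ) : ℕ → Submodule ℂ (MV n)
  | 0 => ⊥
  | (k+1) => Submodule.map (dPi n a) (H0 n k)

/-- The coefficient matrix of the standard Poisson structure π_st = Σ_{1≤i<j≤n} v_i∧v_j. -/
def aST : Fin n → Fin n → ℂ := fun _ _ => 1

section Aux
variable {n : ℕ}


/-- A single, typed at MV n to pin the AddMonoidAlgebra instances. -/
def sgl (A : Fin n → ℤ) (x : ExteriorAlgebra ℂ (Fin n → ℂ)) : MV n :=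
  AddMonoidAlgebra.single A x

lemma sms (A B : Fin n → ℤ) (x y : ExteriorAlgebra ℂ (Fin n → ℂ)) :
    sgl A x * sgl B y = sgl (A + B) (x * y) :=
  AddMonoidAlgebra.single_mul_single ..

lemma v_eq (i : Fin (n+1)) : v n i = sgl 0 (ExteriorAlgebra.ι ℂ (EE n i)) := rfl

lemma sgl_smul (c : ℂ) (A : Fin n → ℤ) (x : ExteriorAlgebra ℂ (Fin n → ℂ)) :
    c • sgl A x = sgl A (c • x) := by
  rw [sgl, sgl, AddMonoidAlgebra.smul_single]

lemma dPi_single (a : Fin n → Fin n → ℂ) (I : Fin n → ℤ)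
    (ω : ExteriorAlgebra ℂ (Fin n → ℂ)) :
    dPi n a (sgl I ω) = sgl 0 (ExteriorAlgebra.ι ℂ (contr n a I)) * sgl I ω := by
  rw [sms, zero_add, dPi, sgl, LinearMap.comp_apply]
  erw [Finsupp.lsum_single]
  rfl

lemma single_iota_mem_W (u : Fin n → ℂ) :
    (sgl 0 (ExteriorAlgebra.ι ℂ u) : MV n) ∈ W n := by
  have hEE : ∀ j : Fin n, EE n j.succ = Pi.single j 1 := by
    intro j; simp [EE]
  have hu : ExteriorAlgebra.ι ℂ u
      = ∑ j, u j • ExteriorAlgebra.ι ℂ (Pi.single j 1 : Fin n → ℂ) := by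
    have h0 : u = ∑ j, u j • (Pi.single j 1 : Fin n → ℂ) := by
      ext j; simp [Pi.single_apply]
    conv_lhs => rw [h0]
    simp
  have heq : (sgl 0 (ExteriorAlgebra.ι ℂ u) : MV n) = ∑ j, u j • v n j.succ := by
    rw [hu, sgl, ← AddMonoidAlgebra.singleAddHom_apply, map_sum]
    simp only [AddMonoidAlgebra.singleAddHom_apply]
    refine Finset.sum_congr rfl fun j _ => ?_
    rw [v_eq, hEE, sgl_smul, sgl]
  rw [heq]
  exact Submodule.sum_mem _ fun j _ => Submodule.smul_mem _ _
    (Submodule.subset_span ⟨j.succ, Fin.succ_ne_zero j, rfl⟩)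

/-- Anticommutation of ι with a list product of ι's. -/
lemma iota_mul_listProd (u : Fin n → ℂ) (L : List (Fin n → ℂ)) :
    ExteriorAlgebra.ι ℂ u * (L.map (ExteriorAlgebra.ι ℂ)).prod
      = ((-1 : ℂ) ^ L.length) •
        ((L.map (ExteriorAlgebra.ι ℂ)).prod * ExteriorAlgebra.ι ℂ u) := by
  induction L with
  | nil => simp
  | cons e L ih =>
    have hswap : ExteriorAlgebra.ι ℂ u * ExteriorAlgebra.ι ℂ e
        = -(ExteriorAlgebra.ι ℂ e * ExteriorAlgebra.ι ℂ u) :=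
      eq_neg_of_add_eq_zero_left (ExteriorAlgebra.ι_add_mul_swap u e)
    simp only [List.map_cons, List.prod_cons, List.length_cons]
    rw [← mul_assoc, hswap, neg_mul, mul_assoc, ih, mul_smul_comm]
    rw [pow_succ, mul_comm ((-1:ℂ) ^ L.length) (-1 : ℂ), mul_smul, neg_one_smul,
      mul_assoc]

lemma VI_eq (I : Fin n → ℤ) : VI n I = sgl 0 (EI n I) := by
  rw [VI, EI]
  generalize ((deg1Set n I).sort (· ≤ ·)) = L
  induction L with
  | nil =>
    simp only [List.map_nil, List.prod_nil]
    rfl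
  | cons i L ih =>
    simp only [List.map_cons, List.prod_cons, ih, v_eq, sms, zero_add]

lemma chiVI_eq (I : Fin n → ℤ) : chiVI n I = sgl I (EI n I) := by
  have hχ : χ n I = sgl I 1 := rfl
  rw [chiVI, hχ, VI_eq, sms, add_zero, one_mul]

/-- w * chiVI = (-1)^|I| • (chiVI * w) for w ∈ W. -/
lemma W_mul_chiVI (I : Fin n → ℤ) {w : MV n} (hw : w ∈ W n) :
    w * chiVI n I = ((-1 : ℂ) ^ wt n I) • (chiVI n I * w) := by
  induction hw using Submodule.span_induction with
  | mem x hx =>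
    obtain ⟨i, -, rfl⟩ := hx
    rw [chiVI_eq, v_eq, sms, sms, zero_add, add_zero, sgl_smul]
    congr 1
    have hEI : EI n I
        = ((((deg1Set n I).sort (· ≤ ·)).map (EE n)).map (ExteriorAlgebra.ι ℂ)).prod := by
      rw [EI, List.map_map]; rfl
    have hlen : (((deg1Set n I).sort (· ≤ ·)).map (EE n)).length = wt n I := by
      simp [wt, Finset.length_sort]
    rw [hEI, iota_mul_listProd, hlen]
  | zero => simp
  | add x y _ _ hx hy =>
    rw [add_mul, mul_add, hx, hy, smul_add]
  | smul c x _ hx =>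
    rw [smul_mul_assoc, hx, mul_smul_comm, smul_comm]

/-- Elements of VIk are of the form sgl I ω. -/
lemma VIk_sgl (I : Fin n → ℤ) (k : ℕ) {x : MV n} (hx : x ∈ VIk n I k) :
    ∃ ω, x = sgl I ω := by
  have hW : ∀ m : ℕ, ∀ y ∈ (W n) ^ m, ∃ ω, y = (sgl 0 ω : MV n) := by
    intro m
    induction m with
    | zero =>
      intro y hy
      rw [pow_zero, Submodule.one_eq_span] at hy
      obtain ⟨c, rfl⟩ := Submodule.mem_span_singleton.1 hy
      exact ⟨c • 1, by rw [← sgl_smul]; congr 1⟩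
    | succ m ih =>
      intro y hy
      rw [pow_succ] at hy
      refine Submodule.mul_induction_on hy (fun p hp q hq => ?_) (fun p q hp hq => ?_)
      · obtain ⟨ωp, rfl⟩ := ih p hp
        have hq' : q ∈ Submodule.span ℂ {x | ∃ i : Fin (n+1), i ≠ 0 ∧ x = v n i} := hq
        clear hq
        induction hq' using Submodule.span_induction with
        | mem z hz =>
          obtain ⟨i, -, rfl⟩ := hz
          exact ⟨ωp * ExteriorAlgebra.ι ℂ (EE n i), by rw [v_eq, sms, add_zero]⟩
        | zero => exact ⟨0, by rw [mul_zero, sgl, AddMonoidAlgebra.single_zero]⟩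
        | add z₁ z₂ _ _ h1 h2 =>
          obtain ⟨a1, ha1⟩ := h1; obtain ⟨a2, ha2⟩ := h2
          exact ⟨a1 + a2, by rw [mul_add, ha1, ha2, sgl, sgl, sgl, AddMonoidAlgebra.single_add]⟩
        | smul c z _ h =>
          obtain ⟨b, hb⟩ := h
          exact ⟨c • b, by rw [mul_smul_comm, hb, sgl_smul]⟩
      · obtain ⟨a1, ha1⟩ := hp; obtain ⟨a2, ha2⟩ := hq
        exact ⟨a1 + a2, by rw [ha1, ha2, sgl, sgl, sgl, AddMonoidAlgebra.single_add]⟩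
  rw [VIk] at hx
  refine Submodule.mul_induction_on hx (fun p hp q hq => ?_) (fun p q hp hq => ?_)
  · obtain ⟨c, rfl⟩ := Submodule.mem_span_singleton.1 hp
    obtain ⟨ω, rfl⟩ := hW _ q hq
    refine ⟨c • (EI n I * ω), ?_⟩
    rw [smul_mul_assoc, chiVI_eq, sms, add_zero, sgl_smul]
  · obtain ⟨a1, ha1⟩ := hp; obtain ⟨a2, ha2⟩ := hq
    exact ⟨a1 + a2, by rw [ha1, ha2, sgl, sgl, sgl, AddMonoidAlgebra.single_add]⟩

lemma W_mul_VIk (I : Fin n → ℤ) (k : ℕ) {w z : MV n}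
    (hw : w ∈ W n) (hz : z ∈ VIk n I k) :
    w * z ∈ Submodule.span ℂ {chiVI n I} * (W n) ^ ((k - wt n I) + 1) := by
  rw [VIk] at hz
  refine Submodule.mul_induction_on hz (fun x hx y hy => ?_) (fun x y hx hy => ?_)
  · obtain ⟨c, rfl⟩ := Submodule.mem_span_singleton.1 hx
    have heq : w * (c • chiVI n I * y)
        = (c * (-1 : ℂ) ^ wt n I) • (chiVI n I * (w * y)) := by
      rw [smul_mul_assoc, mul_smul_comm, ← mul_assoc, W_mul_chiVI I hw,
        smul_mul_assoc, mul_assoc, mul_smul, smul_comm]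
    rw [heq]
    refine Submodule.smul_mem _ _ ?_
    refine Submodule.mul_mem_mul (Submodule.mem_span_singleton_self _) ?_
    rw [pow_succ']
    exact Submodule.mul_mem_mul hw hy
  · rw [mul_add]
    exact Submodule.add_mem _ hx hy

end Aux

/-- d_π(V_I^k) ⊆ V_I^{k+1} for every I ∈ S_k, 0 ≤ k ≤ n (V_I^k seen
inside H⁰(X,∧ᵏT), V_I^{k+1} inside H⁰(X,∧^{k+1}T)). -/
theorem dPi_preserves_weight_spaces (n : ℕ) (a : Fin n → Fin n → ℂ) (k : ℕ)
    (hk : k ≤ n) (I : Fin n → ℤ) (hI : I ∈ Sk n k) :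
    Submodule.map (dPi n a) (VIk n I k) ≤ VIk n I (k+1) := by
  rintro y ⟨x, hx, rfl⟩
  obtain ⟨ω, rfl⟩ := VIk_sgl I k hx
  rw [dPi_single]
  have hwt : wt n I ≤ k := hI.2
  have hexp : (k + 1) - wt n I = (k - wt n I) + 1 := by omega
  rw [VIk, hexp]
  exact W_mul_VIk I k (single_iota_mem_W _) hx

end CPn
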